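/- arXiv:2404.14554 — 2 statements merged into one kernel-verified Lean document; each statement's English description precedes it below -/
import Mathlib

section
/- There exists a constant σ ∈ (0,1), depending only on C, such that for every integer p ≥ 1 and every matrix u ∈ ℝ^{n×p} (rows u_i ∈ ℝ^p), ‖Cu − π(𝟏ᵀu)‖_{π^{-1}} ≤ σ·‖u − π(𝟏ᵀu)‖_{π^{-1}}, where π(𝟏ᵀu) denotes the rank-one matrix whose i-th row is π_i·Σ_{j=1}^n u_j. -/
open Finset

lemma variance_identity {n : ℕ} (w r : Fin n → ℝ) :
    (∑ j, w j) * (∑ j, w j * r j ^ 2) - (∑ j, w j * r j) ^ 2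
      = (1/2) * ∑ j, ∑ k, w j * w k * (r j - r k) ^ 2 := by
  have h : ∀ j k : Fin n, w j * w k * (r j - r k)^2
      = (w j * r j ^2) * w k + w j * (w k * r k ^2) - (2 * (w j * r j)) * (w k * r k) := by
    intros; ring
  simp_rw [h, Finset.sum_sub_distrib, Finset.sum_add_distrib, ← Finset.mul_sum, ← Finset.sum_mul,
    ← Finset.mul_sum]
  ring


lemma pow_entry_nonneg {n : ℕ} {C : Matrix (Fin n) (Fin n) ℝ}
    (hC : ∀ i j, 0 ≤ C i j) (k : ℕ) : ∀ i j, 0 ≤ (C ^ k) i j := by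
  induction k with
  | zero => intro i j; simp [Matrix.one_apply]; split <;> norm_num
  | succ m ih =>
      intro i j
      rw [pow_succ, Matrix.mul_apply]
      exact Finset.sum_nonneg fun m' _ => mul_nonneg (ih i m') (hC m' j)


lemma chain_lemma {n : ℕ} {C : Matrix (Fin n) (Fin n) ℝ}
    (hC : ∀ i j, 0 ≤ C i j) (r : Fin n → ℝ)
    (hadj : ∀ i j, 0 < C i j → r j = r i) :
    ∀ k : ℕ, ∀ i j, 0 < (C ^ k) i j → r j = r i := by
  intro k
  induction k with
  | zero =>
      intro i j h
      simp only [pow_zero, Matrix.one_apply] at h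
      split at h
      · rename_i he; rw [he]
      · exact absurd h (by norm_num)
  | succ m ih =>
      intro i j h
      rw [pow_succ, Matrix.mul_apply] at h
      obtain ⟨m', _, hm'⟩ := Finset.exists_lt_of_sum_lt (f := fun _ => (0:ℝ)) (by simpa using h)
      have h1 : 0 < (C ^ m) i m' := by
        rcases lt_or_eq_of_le (pow_entry_nonneg hC m i m') with h' | h'
        · exact h'
        · exfalso; rw [← h'] at hm'; simp at hm'
      have h2 : 0 < C m' j := by
        rcases lt_or_eq_of_le (hC m' j) with h' | h'
        · exact h'
        · exfalso; rw [← h'] at hm'; simp at hm'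
      rw [hadj m' j h2, ih i m' h1]

lemma strict_lemma {n : ℕ} (C : Matrix (Fin n) (Fin n) ℝ)
    (hCnonneg : ∀ i j, 0 ≤ C i j)
    (hCcol : ∀ j, ∑ i, C i j = 1)
    (hCdiag : ∀ i, 0 < C i i)
    (π : Fin n → ℝ)
    (hπpos : ∀ i, 0 < π i)
    (hπ : C.mulVec π = π)
    (v : Fin n → ℝ) :
    (∑ i, (π i)⁻¹ * (∑ j, C i j * v j)^2) ≤ ∑ i, (π i)⁻¹ * (v i)^2 ∧
      ((∑ i, (π i)⁻¹ * (∑ j, C i j * v j)^2) = ∑ i, (π i)⁻¹ * (v i)^2 →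
        ∀ i j, 0 < C i j → v j / π j = v i / π i) := by
  set r : Fin n → ℝ := fun i => v i / π i with hr
  have hv : ∀ i, v i = π i * r i := by
    intro i
    rw [hr, mul_comm, div_mul_cancel₀ _ (hπpos i).ne']
  have hw : ∀ i, ∑ j, C i j * π j = π i := by
    intro i
    have := congrFun hπ i
    simpa [Matrix.mulVec, dotProduct] using this
  -- defect per i
  set D : Fin n → ℝ := fun i => ∑ j, ∑ k, (C i j * π j) * (C i k * π k) * (r j - r k)^2 with hD
  have hDnonneg : ∀ i, 0 ≤ D i := by
    intro i
    refine Finset.sum_nonneg fun j _ => Finset.sum_nonneg fun k _ => ?_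
    exact mul_nonneg (mul_nonneg (mul_nonneg (hCnonneg i j) (hπpos j).le)
      (mul_nonneg (hCnonneg i k) (hπpos k).le)) (sq_nonneg _)
  have hident : ∀ i, (π i)⁻¹ * (∑ j, C i j * v j)^2
      = (∑ j, (C i j * π j) * r j ^ 2) - (π i)⁻¹ * ((1/2) * D i) := by
    intro i
    have hvar := variance_identity (fun j => C i j * π j) r
    rw [hw i] at hvar
    have hπi := (hπpos i).ne'
    have hCv : ∀ j, C i j * v j = (C i j * π j) * r j := by
      intro j; rw [hv j]; ring
    simp_rw [hCv]
    have : (∑ j, (C i j * π j) * r j)^2 = π i * (∑ j, (C i j * π j) * r j ^ 2) - (1/2) * D i := by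
      rw [hD]; linarith [hvar]
    rw [this]
    field_simp
  have hQ : (∑ i, (π i)⁻¹ * (v i)^2) = ∑ i, ∑ j, (C i j * π j) * r j ^ 2 := by
    rw [Finset.sum_comm]
    refine Finset.sum_congr rfl fun j _ => ?_
    rw [← Finset.sum_mul, ← Finset.sum_mul, hCcol j, one_mul, hv j]
    have hne := (hπpos j).ne'
    field_simp
  have hmain : (∑ i, (π i)⁻¹ * (∑ j, C i j * v j)^2)
      = (∑ i, (π i)⁻¹ * (v i)^2) - ∑ i, (π i)⁻¹ * ((1/2) * D i) := by
    rw [hQ]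
    simp_rw [hident, Finset.sum_sub_distrib]
  have hTnonneg : 0 ≤ ∑ i, (π i)⁻¹ * ((1/2) * D i) :=
    Finset.sum_nonneg fun i _ => mul_nonneg (inv_nonneg.mpr (hπpos i).le)
      (mul_nonneg (by norm_num) (hDnonneg i))
  constructor
  · linarith [hmain, hTnonneg]
  · intro heq i j hij
    have hT0 : ∑ i, (π i)⁻¹ * ((1/2) * D i) = 0 := by linarith [hmain]
    have hDi0 : D i = 0 := by
      have := (Finset.sum_eq_zero_iff_of_nonneg (fun i _ => mul_nonneg (inv_nonneg.mpr (hπpos i).le)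
        (mul_nonneg (by norm_num) (hDnonneg i)))).mp hT0 i (Finset.mem_univ i)
      rcases mul_eq_zero.mp this with h | h
      · exact absurd h (inv_ne_zero (hπpos i).ne')
      · rcases mul_eq_zero.mp h with h' | h'
        · norm_num at h'
        · exact h'
    -- each term of D i is zero
    have hterm : (C i j * π j) * (C i i * π i) * (r j - r i)^2 = 0 := by
      have h1 := (Finset.sum_eq_zero_iff_of_nonneg (fun j _ =>
        Finset.sum_nonneg fun k _ => mul_nonneg (mul_nonneg (mul_nonneg (hCnonneg i j) (hπpos j).le)
          (mul_nonneg (hCnonneg i k) (hπpos k).le)) (sq_nonneg _))).mp hDi0 j (Finset.mem_univ j)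
      exact (Finset.sum_eq_zero_iff_of_nonneg (fun k _ =>
        mul_nonneg (mul_nonneg (mul_nonneg (hCnonneg i j) (hπpos j).le)
          (mul_nonneg (hCnonneg i k) (hπpos k).le)) (sq_nonneg _))).mp h1 i (Finset.mem_univ i)
    have hpos : 0 < (C i j * π j) * (C i i * π i) :=
      mul_pos (mul_pos hij (hπpos j)) (mul_pos (hCdiag i) (hπpos i))
    have : (r j - r i)^2 = 0 := by
      rcases mul_eq_zero.mp hterm with h | h
      · exact absurd h hpos.ne'
      · exact h
    have := pow_eq_zero_iff (n := 2) (by norm_num) |>.mp this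
    have : r j = r i := by linarith [sub_eq_zero.mp this]
    simpa [hr] using this

lemma scalar_contraction {n : ℕ} (C : Matrix (Fin n) (Fin n) ℝ)
    (hCnonneg : ∀ i j, 0 ≤ C i j)
    (hCcol : ∀ j, ∑ i, C i j = 1)
    (hCdiag : ∀ i, 0 < C i i)
    (hCirr : ∀ i j, ∃ k : ℕ, 1 ≤ k ∧ 0 < (C ^ k) i j)
    (π : Fin n → ℝ)
    (hπpos : ∀ i, 0 < π i)
    (hπ : C.mulVec π = π)
    (hπsum : ∑ i, π i = 1) :
    ∃ σ : ℝ, 0 < σ ∧ σ < 1 ∧ ∀ v : Fin n → ℝ, (∑ i, v i) = 0 →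
      ∑ i, (π i)⁻¹ * (∑ j, C i j * v j)^2 ≤ σ^2 * ∑ i, (π i)⁻¹ * (v i)^2 := by
  set f : (Fin n → ℝ) → ℝ := fun v => ∑ i, (π i)⁻¹ * (∑ j, C i j * v j)^2 with hf
  set Q : (Fin n → ℝ) → ℝ := fun v => ∑ i, (π i)⁻¹ * (v i)^2 with hQdef
  have hQnonneg : ∀ v, 0 ≤ Q v := fun v =>
    Finset.sum_nonneg fun i _ => mul_nonneg (inv_nonneg.mpr (hπpos i).le) (sq_nonneg _)
  have hfnonneg : ∀ v, 0 ≤ f v := fun v =>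
    Finset.sum_nonneg fun i _ => mul_nonneg (inv_nonneg.mpr (hπpos i).le) (sq_nonneg _)
  -- zero case
  have hQzero : ∀ v : Fin n → ℝ, Q v = 0 → v = 0 := by
    intro v hv
    funext i
    have := (Finset.sum_eq_zero_iff_of_nonneg (fun i _ =>
      mul_nonneg (inv_nonneg.mpr (hπpos i).le) (sq_nonneg _))).mp hv i (Finset.mem_univ i)
    have h2 : (v i)^2 = 0 := by
      rcases mul_eq_zero.mp this with h | h
      · exact absurd h (inv_ne_zero (hπpos i).ne')
      · exact h
    simpa using pow_eq_zero_iff (n := 2) (by norm_num) |>.mp h2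
  -- equality forces v = 0
  have hzero : ∀ v : Fin n → ℝ, (∑ i, v i) = 0 → f v = Q v → v = 0 := by
    intro v hsum heq
    have hadj := (strict_lemma C hCnonneg hCcol hCdiag π hπpos hπ v).2 heq
    set r : Fin n → ℝ := fun i => v i / π i with hr
    have hconst : ∀ i j : Fin n, r j = r i := by
      intro i j
      obtain ⟨k, _, hk⟩ := hCirr i j
      exact chain_lemma hCnonneg r (fun a b hab => hadj a b hab) k i j hk
    rcases Nat.eq_zero_or_pos n with hn | hn
    · subst hn; funext i; exact absurd i.2 (by omega)
    · have i0 : Fin n := ⟨0, hn⟩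
      have hsum' : ∑ i, v i = r i0 := by
        calc ∑ i, v i = ∑ i, π i * r i0 := by
              refine Finset.sum_congr rfl fun i _ => ?_
              rw [← hconst i0 i, mul_comm]
              show v i = v i / π i * π i
              rw [div_mul_cancel₀ _ (hπpos i).ne']
          _ = r i0 := by rw [← Finset.sum_mul, hπsum, one_mul]
      have hr0 : r i0 = 0 := by rw [← hsum', hsum]
      funext i
      have hri : r i = 0 := by rw [hconst i0 i]; exact hr0
      have hvi : v i / π i = 0 := hri
      simp only [Pi.zero_apply]
      exact (div_eq_zero_iff.mp hvi).resolve_right (hπpos i).ne'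
  -- f v ≤ Q v always
  have hle : ∀ v : Fin n → ℝ, f v ≤ Q v := fun v =>
    (strict_lemma C hCnonneg hCcol hCdiag π hπpos hπ v).1
  -- scaling
  have hQscale : ∀ (c : ℝ) (v : Fin n → ℝ), Q (c • v) = c^2 * Q v := by
    intro c v
    rw [hQdef, Finset.mul_sum]
    refine Finset.sum_congr rfl fun i _ => ?_
    simp [mul_pow]; ring
  have hfscale : ∀ (c : ℝ) (v : Fin n → ℝ), f (c • v) = c^2 * f v := by
    intro c v
    rw [hf, Finset.mul_sum]
    refine Finset.sum_congr rfl fun i _ => ?_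
    have : ∀ j, C i j * (c • v) j = c * (C i j * v j) := by intro j; simp; ring
    simp_rw [this, ← Finset.mul_sum, mul_pow]
    ring
  -- the set S
  set S : Set (EuclideanSpace ℝ (Fin n)) := {v | (∑ i, v i) = 0 ∧ Q v = 1} with hS
  have hfc : Continuous (fun v : EuclideanSpace ℝ (Fin n) => f v) := by fun_prop
  have hQc : Continuous (fun v : EuclideanSpace ℝ (Fin n) => Q v) := by fun_prop
  have hsumc : Continuous (fun v : EuclideanSpace ℝ (Fin n) => ∑ i, v i) := by fun_prop
  have hSclosed : IsClosed S := by
    have h1 : IsClosed {v : EuclideanSpace ℝ (Fin n) | (∑ i, v i) = 0} :=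
      isClosed_eq hsumc continuous_const
    have h2 : IsClosed {v : EuclideanSpace ℝ (Fin n) | Q v = 1} :=
      isClosed_eq hQc continuous_const
    exact h1.inter h2
  have hSbdd : Bornology.IsBounded S := by
    refine (Metric.isBounded_closedBall (x := (0 : EuclideanSpace ℝ (Fin n))) (r := 1)).subset ?_
    intro v hv
    rw [Metric.mem_closedBall, dist_zero_right]
    have hQ1 : Q v = 1 := hv.2
    have hb : ∀ i, (v i)^2 ≤ π i := by
      intro i
      have hterm : (π i)⁻¹ * (v i)^2 ≤ 1 := by
        rw [← hQ1]
        exact Finset.single_le_sum (f := fun i => (π i)⁻¹ * (v i)^2)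
          (fun i _ => mul_nonneg (inv_nonneg.mpr (hπpos i).le) (sq_nonneg _)) (Finset.mem_univ i)
      calc (v i)^2 = π i * ((π i)⁻¹ * (v i)^2) := by
            rw [← mul_assoc, mul_inv_cancel₀ (hπpos i).ne', one_mul]
        _ ≤ π i * 1 := by exact mul_le_mul_of_nonneg_left hterm (hπpos i).le
        _ = π i := mul_one _
    have : ‖v‖^2 ≤ 1 := by
      rw [EuclideanSpace.norm_eq, Real.sq_sqrt (Finset.sum_nonneg fun i _ => sq_nonneg _)]
      calc (∑ i, ‖v i‖^2) = ∑ i, (v i)^2 := by simp [sq_abs]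
        _ ≤ ∑ i, π i := Finset.sum_le_sum fun i _ => hb i
        _ = 1 := hπsum
    nlinarith [norm_nonneg v]
  have hScompact : IsCompact S := Metric.isCompact_of_isClosed_isBounded hSclosed hSbdd
  by_cases hSne : S.Nonempty
  · obtain ⟨v0, hv0S, hmax⟩ := hScompact.exists_isMaxOn hSne hfc.continuousOn
    set m : ℝ := f v0 with hm
    have hm0 : 0 ≤ m := hfnonneg v0
    have hm1 : m < 1 := by
      rcases lt_or_eq_of_le (hle v0) with h | h
      · calc m = f v0 := hm
          _ < Q v0 := h
          _ = 1 := hv0S.2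
      · exfalso
        have hv00 : v0.ofLp = 0 := hzero v0 hv0S.1 h
        have hQ0 : Q v0 = 0 := by
          rw [hQdef, hv00]
          simp [PiLp.zero_apply]
        rw [hv0S.2] at hQ0; norm_num at hQ0
    refine ⟨Real.sqrt ((1+m)/2), Real.sqrt_pos.mpr (by linarith), ?_, ?_⟩
    · exact (Real.sqrt_lt' one_pos).mpr (by nlinarith)
    · intro v hsum
      show f v ≤ _ ^ 2 * Q v
      have hσ2 : (Real.sqrt ((1+m)/2))^2 = (1+m)/2 := Real.sq_sqrt (by linarith)
      rw [hσ2]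
      by_cases hQv : Q v = 0
      · have hv0 : v = 0 := hQzero v hQv
        have hf0 : f v = 0 := by rw [hv0, hf]; simp
        rw [hf0, hQv, mul_zero]
      · have hQpos : 0 < Q v := lt_of_le_of_ne (hQnonneg v) (Ne.symm hQv)
        set c : ℝ := (Real.sqrt (Q v))⁻¹ with hc
        have hcpos : 0 < c := inv_pos.mpr (Real.sqrt_pos.mpr hQpos)
        have hc2 : c^2 = (Q v)⁻¹ := by
          rw [hc, ← Real.sqrt_inv, Real.sq_sqrt (inv_nonneg.mpr hQpos.le)]
        have hmem : (WithLp.toLp 2 (c • v) : EuclideanSpace ℝ (Fin n)) ∈ S := by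
          show (∑ i, (c • v) i) = 0 ∧ Q (c • v) = 1
          constructor
          · have : ∑ i, (c • v) i = c * ∑ i, v i := by
              rw [Finset.mul_sum]; exact Finset.sum_congr rfl fun i _ => rfl
            rw [this, hsum, mul_zero]
          · rw [hQscale, hc2, inv_mul_cancel₀ hQv]
        have hfle : f (c • v) ≤ m := by
          have h := isMaxOn_iff.mp hmax _ hmem
          rw [WithLp.ofLp_toLp] at h
          exact h
        rw [hfscale, hc2] at hfle
        have : f v ≤ m * Q v := by
          have := mul_le_mul_of_nonneg_left hfle hQpos.le
          rw [← mul_assoc, mul_inv_cancel₀ hQv, one_mul] at this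
          simpa [hm, mul_comm] using this
        nlinarith [hQnonneg v, this]
  · refine ⟨1/2, by norm_num, by norm_num, ?_⟩
    intro v hsum
    show f v ≤ (1/2 : ℝ) ^ 2 * Q v
    by_cases hQv : Q v = 0
    · have hv0 : v = 0 := hQzero v hQv
      have hf0 : f v = 0 := by rw [hv0, hf]; simp
      rw [hf0, hQv, mul_zero]
    · exfalso
      have hQpos : 0 < Q v := lt_of_le_of_ne (hQnonneg v) (Ne.symm hQv)
      set c : ℝ := (Real.sqrt (Q v))⁻¹ with hc
      have hc2 : c^2 = (Q v)⁻¹ := by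
        rw [hc, ← Real.sqrt_inv, Real.sq_sqrt (inv_nonneg.mpr hQpos.le)]
      refine hSne ⟨WithLp.toLp 2 (c • v), ?_, ?_⟩
      · show ∑ i, (c • v) i = 0
        have : ∑ i, (c • v) i = c * ∑ i, v i := by
          rw [Finset.mul_sum]; exact Finset.sum_congr rfl fun i _ => rfl
        rw [this, hsum, mul_zero]
      · show Q (c • v) = 1
        rw [hQscale, hc2, inv_mul_cancel₀ hQv]




/-- Contraction of a column-stochastic, irreducible matrix with positive
diagonal in the `π⁻¹`-weighted norm: there is `σ ∈ (0,1)` (depending only on `C`) such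
that for every `p ≥ 1` and every `u ∈ ℝ^{n×p}`,
`‖Cu − π(𝟏ᵀu)‖_{π⁻¹} ≤ σ ‖u − π(𝟏ᵀu)‖_{π⁻¹}`. -/
theorem column_stochastic_contraction
    (n : ℕ)
    (C : Matrix (Fin n) (Fin n) ℝ)
    (hCnonneg : ∀ i j, 0 ≤ C i j)
    (hCcol : ∀ j, ∑ i, C i j = 1)
    (hCdiag : ∀ i, 0 < C i i)
    (hCirr : ∀ i j, ∃ k : ℕ, 1 ≤ k ∧ 0 < (C ^ k) i j)
    (π : Fin n → ℝ)
    (hπpos : ∀ i, 0 < π i)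
    (hπ : C.mulVec π = π)
    (hπsum : ∑ i, π i = 1) :
    ∃ σ : ℝ, 0 < σ ∧ σ < 1 ∧
      ∀ p : ℕ, 1 ≤ p → ∀ u : Fin n → EuclideanSpace ℝ (Fin p),
        Real.sqrt (∑ i, (π i)⁻¹ * ‖(∑ j, C i j • u j) - π i • (∑ j, u j)‖ ^ 2)
          ≤ σ * Real.sqrt (∑ i, (π i)⁻¹ * ‖u i - π i • (∑ j, u j)‖ ^ 2) := by
  obtain ⟨σ, hσ0, hσ1, hσ⟩ := scalar_contraction C hCnonneg hCcol hCdiag hCirr π hπpos hπ hπsum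
  refine ⟨σ, hσ0, hσ1, ?_⟩
  intro p _ u
  set S : EuclideanSpace ℝ (Fin p) := ∑ j, u j with hSdef
  have hw : ∀ i, ∑ j, C i j * π j = π i := by
    intro i
    have := congrFun hπ i
    simpa [Matrix.mulVec, dotProduct] using this
  have hnorm : ∀ x : EuclideanSpace ℝ (Fin p), ‖x‖^2 = ∑ t, (x t)^2 := by
    intro x
    rw [EuclideanSpace.norm_eq, Real.sq_sqrt (Finset.sum_nonneg fun t _ => sq_nonneg _)]
    simp [sq_abs]
  have happly1 : ∀ (i : Fin n) (t : Fin p),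
      ((∑ j, C i j • u j) - π i • S) t = (∑ j, C i j * u j t) - π i * S t := by
    intro i t
    have h1 : (∑ j, C i j • u j) t = ∑ j, C i j * u j t := by
      rw [WithLp.ofLp_sum, Finset.sum_apply t _ _]
      exact Finset.sum_congr rfl fun j _ => rfl
    simp [PiLp.sub_apply, PiLp.smul_apply, smul_eq_mul, h1]
  have happly2 : ∀ (i : Fin n) (t : Fin p),
      (u i - π i • S) t = u i t - π i * S t := by
    intro i t
    simp [PiLp.sub_apply, PiLp.smul_apply, smul_eq_mul]
  have key : ∀ t : Fin p,
      ∑ i, (π i)⁻¹ * ((∑ j, C i j * u j t) - π i * S t)^2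
        ≤ σ^2 * ∑ i, (π i)⁻¹ * (u i t - π i * S t)^2 := by
    intro t
    have hSt : S t = ∑ j, u j t := by rw [hSdef, WithLp.ofLp_sum, Finset.sum_apply]
    set v : Fin n → ℝ := fun i => u i t - π i * S t with hv
    have hvs : ∑ i, v i = 0 := by
      rw [hv]
      rw [Finset.sum_sub_distrib, ← Finset.sum_mul, hπsum, hSt, one_mul, sub_self]
    have hCv : ∀ i, ∑ j, C i j * v j = (∑ j, C i j * u j t) - π i * S t := by
      intro i
      have : ∀ j, C i j * v j = C i j * u j t - (C i j * π j) * S t := by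
        intro j; rw [hv]; ring
      simp_rw [this]
      rw [Finset.sum_sub_distrib, ← Finset.sum_mul, hw i]
    have h := hσ v hvs
    simp_rw [hCv] at h
    exact h
  have hA : (∑ i, (π i)⁻¹ * ‖(∑ j, C i j • u j) - π i • S‖ ^ 2)
      = ∑ t, ∑ i, (π i)⁻¹ * ((∑ j, C i j * u j t) - π i * S t)^2 := by
    simp_rw [hnorm, happly1, Finset.mul_sum]
    exact Finset.sum_comm
  have hB : (∑ i, (π i)⁻¹ * ‖u i - π i • S‖ ^ 2)
      = ∑ t, ∑ i, (π i)⁻¹ * (u i t - π i * S t)^2 := by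
    simp_rw [hnorm, happly2, Finset.mul_sum]
    exact Finset.sum_comm
  have hAB : (∑ i, (π i)⁻¹ * ‖(∑ j, C i j • u j) - π i • S‖ ^ 2)
      ≤ σ^2 * ∑ i, (π i)⁻¹ * ‖u i - π i • S‖ ^ 2 := by
    rw [hA, hB, Finset.mul_sum]
    exact Finset.sum_le_sum fun t _ => key t
  have hBnonneg : 0 ≤ ∑ i, (π i)⁻¹ * ‖u i - π i • S‖ ^ 2 :=
    Finset.sum_nonneg fun i _ => mul_nonneg (inv_nonneg.mpr (hπpos i).le) (sq_nonneg _)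
  calc Real.sqrt (∑ i, (π i)⁻¹ * ‖(∑ j, C i j • u j) - π i • S‖ ^ 2)
      ≤ Real.sqrt (σ^2 * ∑ i, (π i)⁻¹ * ‖u i - π i • S‖ ^ 2) := Real.sqrt_le_sqrt hAB
    _ = σ * Real.sqrt (∑ i, (π i)⁻¹ * ‖u i - π i • S‖ ^ 2) := by
        rw [Real.sqrt_mul (sq_nonneg σ), Real.sqrt_sq hσ0.le]
end

section
/- The spectral radius of M is strictly less than λ*, i.e., every complex eigenvalue λ of M satisfies |λ| < λ*, if and only if det(λ*·I − M) > 0. -/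
set_option maxHeartbeats 1600000

lemma key_ineq (a1 a2 a3 m12 m13 m21 m23 m31 m32 u1 u2 u3 : ℝ)
    (ha1 : 0 < a1) (ha2 : 0 < a2) (ha3 : 0 < a3)
    (hm12 : 0 ≤ m12) (hm13 : 0 ≤ m13) (hm21 : 0 ≤ m21)
    (hm23 : 0 ≤ m23) (hm31 : 0 ≤ m31) (hm32 : 0 ≤ m32)
    (hu1 : 0 ≤ u1) (hu2 : 0 ≤ u2) (hu3 : 0 ≤ u3)
    (hne : 0 < u1 ∨ 0 < u2 ∨ 0 < u3)
    (h1 : a1 * u1 ≤ m12 * u2 + m13 * u3)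
    (h2 : a2 * u2 ≤ m21 * u1 + m23 * u3)
    (h3 : a3 * u3 ≤ m31 * u1 + m32 * u2) :
    a1*a2*a3 - m12*m23*m31 - m13*m21*m32 - a1*(m23*m32) - a2*(m13*m31) - a3*(m12*m21) ≤ 0 := by
  rcases hu1.lt_or_eq with hu1' | hu1'
  · rcases hu2.lt_or_eq with hu2' | hu2'
    · rcases hu3.lt_or_eq with hu3' | hu3'
      · -- all positive : use the big certificate
        have hx1 : (0:ℝ) ≤ (m12*u2 + m13*u3) - a1*u1 := by linarith
        have hx2 : (0:ℝ) ≤ (m21*u1 + m23*u3) - a2*u2 := by linarith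
        have hx3 : (0:ℝ) ≤ (m31*u1 + m32*u2) - a3*u3 := by linarith
        have hC1 : (0:ℝ) < m12*u2 + m13*u3 := lt_of_lt_of_le (mul_pos ha1 hu1') h1
        have hC2 : (0:ℝ) < m21*u1 + m23*u3 := lt_of_lt_of_le (mul_pos ha2 hu2') h2
        have hC3 : (0:ℝ) < m31*u1 + m32*u2 := lt_of_lt_of_le (mul_pos ha3 hu3') h3
        have hP1 : (0:ℝ) ≤ m21*m31*u1*u1 + m21*m32*u1*u2 + m23*m31*u1*u3 := by
          have := mul_nonneg (mul_nonneg (mul_nonneg hm21 hm31) hu1) hu1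
          have := mul_nonneg (mul_nonneg (mul_nonneg hm21 hm32) hu1) hu2
          have := mul_nonneg (mul_nonneg (mul_nonneg hm23 hm31) hu1) hu3
          linarith
        have hP2 : (0:ℝ) ≤ m12*m31*u1*u2 + m12*m32*u2*u2 + m13*m32*u2*u3 := by
          have := mul_nonneg (mul_nonneg (mul_nonneg hm12 hm31) hu1) hu2
          have := mul_nonneg (mul_nonneg (mul_nonneg hm12 hm32) hu2) hu2
          have := mul_nonneg (mul_nonneg (mul_nonneg hm13 hm32) hu2) hu3
          linarith
        have hP3 : (0:ℝ) ≤ m12*m23*u2*u3 + m13*m21*u1*u3 + m13*m23*u3*u3 := by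
          have := mul_nonneg (mul_nonneg (mul_nonneg hm12 hm23) hu2) hu3
          have := mul_nonneg (mul_nonneg (mul_nonneg hm13 hm21) hu1) hu3
          have := mul_nonneg (mul_nonneg (mul_nonneg hm13 hm23) hu3) hu3
          linarith
        have hscyc : (0:ℝ) ≤ (m12*m23*m31 + m13*m21*m32)*(u1*u2*u3) := by
          have h1' := mul_nonneg (mul_nonneg hm12 hm23) hm31
          have h2' := mul_nonneg (mul_nonneg hm13 hm21) hm32
          have hu := mul_nonneg (mul_nonneg hu1 hu2) hu3
          exact mul_nonneg (by linarith) (by linarith [hu])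
        have hau1 : (0:ℝ) ≤ a1*u1 := mul_nonneg ha1.le hu1
        have hau2 : (0:ℝ) ≤ a2*u2 := mul_nonneg ha2.le hu2
        have hau3 : (0:ℝ) ≤ a3*u3 := mul_nonneg ha3.le hu3
        have hident : (-(a1*a2*a3 - m12*m23*m31 - m13*m21*m32 - a1*(m23*m32) - a2*(m13*m31) - a3*(m12*m21))) * ((u1*u2*u3) * ((m12*u2 + m13*u3) * (m21*u1 + m23*u3) * (m31*u1 + m32*u2))) =
            (m12*u2 + m13*u3) * (m21*m31*u1*u1 + m21*m32*u1*u2 + m23*m31*u1*u3) * ((m12*u2 + m13*u3) - a1*u1) * (a2*u2) * (a3*u3) +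
            (m21*u1 + m23*u3) * (m12*m31*u1*u2 + m12*m32*u2*u2 + m13*m32*u2*u3) * (a1*u1) * ((m21*u1 + m23*u3) - a2*u2) * (a3*u3) +
            (m31*u1 + m32*u2) * (m12*m23*u2*u3 + m13*m21*u1*u3 + m13*m23*u3*u3) * (a1*u1) * (a2*u2) * ((m31*u1 + m32*u2) - a3*u3) +
            ((m12*m23*m31 + m13*m21*m32)*(u1*u2*u3) + m12*m21*u1*u2*(m31*u1 + m32*u2)) * ((m12*u2 + m13*u3) - a1*u1) * ((m21*u1 + m23*u3) - a2*u2) * (a3*u3) +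
            ((m12*m23*m31 + m13*m21*m32)*(u1*u2*u3) + m13*m31*u1*u3*(m21*u1 + m23*u3)) * ((m12*u2 + m13*u3) - a1*u1) * (a2*u2) * ((m31*u1 + m32*u2) - a3*u3) +
            ((m12*m23*m31 + m13*m21*m32)*(u1*u2*u3) + m23*m32*u2*u3*(m12*u2 + m13*u3)) * (a1*u1) * ((m21*u1 + m23*u3) - a2*u2) * ((m31*u1 + m32*u2) - a3*u3) +
            (m12*m23*m31 + m13*m21*m32)*(u1*u2*u3) * ((m12*u2 + m13*u3) - a1*u1) * ((m21*u1 + m23*u3) - a2*u2) * ((m31*u1 + m32*u2) - a3*u3) := by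
          ring
        have hT1 := mul_nonneg (mul_nonneg (mul_nonneg (mul_nonneg hC1.le hP1) hx1) hau2) hau3
        have hT2 := mul_nonneg (mul_nonneg (mul_nonneg (mul_nonneg hC2.le hP2) hau1) hx2) hau3
        have hT3 := mul_nonneg (mul_nonneg (mul_nonneg (mul_nonneg hC3.le hP3) hau1) hau2) hx3
        have hS4 : (0:ℝ) ≤ (m12*m23*m31 + m13*m21*m32)*(u1*u2*u3) + m12*m21*u1*u2*(m31*u1 + m32*u2) := by
          have := mul_nonneg (mul_nonneg (mul_nonneg hm12 hm21) (mul_nonneg hu1 hu2)) hC3.le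
          nlinarith [hscyc]
        have hS5 : (0:ℝ) ≤ (m12*m23*m31 + m13*m21*m32)*(u1*u2*u3) + m13*m31*u1*u3*(m21*u1 + m23*u3) := by
          have := mul_nonneg (mul_nonneg (mul_nonneg hm13 hm31) (mul_nonneg hu1 hu3)) hC2.le
          nlinarith [hscyc]
        have hS6 : (0:ℝ) ≤ (m12*m23*m31 + m13*m21*m32)*(u1*u2*u3) + m23*m32*u2*u3*(m12*u2 + m13*u3) := by
          have := mul_nonneg (mul_nonneg (mul_nonneg hm23 hm32) (mul_nonneg hu2 hu3)) hC1.le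
          nlinarith [hscyc]
        have hT4 := mul_nonneg (mul_nonneg (mul_nonneg hS4 hx1) hx2) hau3
        have hT5 := mul_nonneg (mul_nonneg (mul_nonneg hS5 hx1) hau2) hx3
        have hT6 := mul_nonneg (mul_nonneg (mul_nonneg hS6 hau1) hx2) hx3
        have hT7 := mul_nonneg (mul_nonneg (mul_nonneg hscyc hx1) hx2) hx3
        have hRHS : (0:ℝ) ≤ (-(a1*a2*a3 - m12*m23*m31 - m13*m21*m32 - a1*(m23*m32) - a2*(m13*m31) - a3*(m12*m21))) * ((u1*u2*u3) * ((m12*u2 + m13*u3) * (m21*u1 + m23*u3) * (m31*u1 + m32*u2))) := by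
          rw [hident]; linarith
        have hpos : (0:ℝ) < (u1*u2*u3) * ((m12*u2 + m13*u3) * (m21*u1 + m23*u3) * (m31*u1 + m32*u2)) :=
          mul_pos (mul_pos (mul_pos hu1' hu2') hu3') (mul_pos (mul_pos hC1 hC2) hC3)
        have hfin := (mul_nonneg_iff_of_pos_right hpos).mp hRHS
        linarith
      · -- u3 = 0, u1,u2 > 0
        subst hu3'
        have h4 : (a1*u1)*(a2*u2) ≤ (m12*u2)*(m21*u1) :=
          mul_le_mul (by linarith) (by linarith) (mul_nonneg ha2.le hu2) (mul_nonneg hm12 hu2)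
        have hB : a1*a2 ≤ m12*m21 := by nlinarith [h4, mul_pos hu1' hu2']
        have hfin := mul_nonneg ha3.le (sub_nonneg.mpr hB)
        have n1 := mul_nonneg (mul_nonneg hm12 hm23) hm31
        have n2 := mul_nonneg (mul_nonneg hm13 hm21) hm32
        have n3 := mul_nonneg ha1.le (mul_nonneg hm23 hm32)
        have n4 := mul_nonneg ha2.le (mul_nonneg hm13 hm31)
        nlinarith [hfin, n1, n2, n3, n4]
    · -- u2 = 0
      subst hu2'
      rcases hu3.lt_or_eq with hu3' | hu3'
      · -- u1, u3 > 0
        have h4 : (a1*u1)*(a3*u3) ≤ (m13*u3)*(m31*u1) :=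
          mul_le_mul (by linarith) (by linarith) (mul_nonneg ha3.le hu3) (mul_nonneg hm13 hu3)
        have hB : a1*a3 ≤ m13*m31 := by nlinarith [h4, mul_pos hu1' hu3']
        have hfin := mul_nonneg ha2.le (sub_nonneg.mpr hB)
        have n1 := mul_nonneg (mul_nonneg hm12 hm23) hm31
        have n2 := mul_nonneg (mul_nonneg hm13 hm21) hm32
        have n3 := mul_nonneg ha1.le (mul_nonneg hm23 hm32)
        have n4 := mul_nonneg ha3.le (mul_nonneg hm12 hm21)
        nlinarith [hfin, n1, n2, n3, n4]
      · -- only u1 > 0 : contradiction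
        subst hu3'
        nlinarith [mul_pos ha1 hu1']
  · -- u1 = 0
    subst hu1'
    rcases hu2.lt_or_eq with hu2' | hu2'
    · rcases hu3.lt_or_eq with hu3' | hu3'
      · -- u2, u3 > 0
        have h4 : (a2*u2)*(a3*u3) ≤ (m23*u3)*(m32*u2) :=
          mul_le_mul (by linarith) (by linarith) (mul_nonneg ha3.le hu3) (mul_nonneg hm23 hu3)
        have hB : a2*a3 ≤ m23*m32 := by nlinarith [h4, mul_pos hu2' hu3']
        have hfin := mul_nonneg ha1.le (sub_nonneg.mpr hB)
        have n1 := mul_nonneg (mul_nonneg hm12 hm23) hm31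
        have n2 := mul_nonneg (mul_nonneg hm13 hm21) hm32
        have n3 := mul_nonneg ha2.le (mul_nonneg hm13 hm31)
        have n4 := mul_nonneg ha3.le (mul_nonneg hm12 hm21)
        nlinarith [hfin, n1, n2, n3, n4]
      · -- only u2 > 0 : contradiction
        subst hu3'
        nlinarith [mul_pos ha2 hu2']
    · rcases hu3.lt_or_eq with hu3' | hu3'
      · -- only u3 > 0 : contradiction
        subst hu2'
        nlinarith [mul_pos ha3 hu3']
      · -- all zero : contradicts hne
        rcases hne with h | h | h <;> linarith

/-- For a nonnegative irreducible `3×3` matrix `M` and `λ* > 0` with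
`M_{ii} < λ*` for all `i`, the spectral radius of `M` is strictly less than `λ*`
(i.e. every complex eigenvalue `λ` of `M` satisfies `|λ| < λ*`) if and only if
`det(λ* I − M) > 0`. -/
theorem spectral_radius_lt_iff_det_pos
    (M : Matrix (Fin 3) (Fin 3) ℝ)
    (hMnonneg : ∀ i j, 0 ≤ M i j)
    (hMirr : ∀ i j, ∃ k : ℕ, 1 ≤ k ∧ 0 < (M ^ k) i j)
    (lam : ℝ) (hlam : 0 < lam)
    (hdiag : ∀ i, M i i < lam) :
    (∀ (z : ℂ) (v : Fin 3 → ℂ), v ≠ 0 →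
        (M.map (Complex.ofReal)).mulVec v = z • v → ‖z‖ < lam) ↔
    0 < (lam • (1 : Matrix (Fin 3) (Fin 3) ℝ) - M).det := by
  have hdet3 : ∀ t : ℝ, (t • (1 : Matrix (Fin 3) (Fin 3) ℝ) - M).det =
      (t - M 0 0) * (t - M 1 1) * (t - M 2 2)
        - M 0 1 * M 1 2 * M 2 0 - M 0 2 * M 1 0 * M 2 1
        - (t - M 0 0) * (M 1 2 * M 2 1) - (t - M 1 1) * (M 0 2 * M 2 0)
        - (t - M 2 2) * (M 0 1 * M 1 0) := by
    intro t
    simp [Matrix.det_fin_three, Matrix.sub_apply, Matrix.smul_apply, Matrix.one_apply]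
    ring
  constructor
  · -- forward
    intro h
    by_contra hle
    push_neg at hle
    set b2 : ℝ := -(M 0 0 + M 1 1 + M 2 2) with hb2def
    set b1 : ℝ := M 0 0 * M 1 1 + M 0 0 * M 2 2 + M 1 1 * M 2 2
        - M 0 1 * M 1 0 - M 0 2 * M 2 0 - M 1 2 * M 2 1 with hb1def
    set b0 : ℝ := -(M 0 0 * (M 1 1 * M 2 2 - M 1 2 * M 2 1)
        - M 0 1 * (M 1 0 * M 2 2 - M 1 2 * M 2 0)
        + M 0 2 * (M 1 0 * M 2 1 - M 1 1 * M 2 0)) with hb0def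
    have hcubic : ∀ t : ℝ, (t • (1 : Matrix (Fin 3) (Fin 3) ℝ) - M).det =
        t^3 + b2*t^2 + b1*t + b0 := by
      intro t
      rw [hdet3 t, hb2def, hb1def, hb0def]; ring
    set c : ℝ := |b2| + |b1| + |b0| with hcdef
    have hc : 0 ≤ c := by positivity
    set T : ℝ := 1 + lam + c with hTdef
    have hT1 : (1:ℝ) ≤ T := by linarith
    have hT0 : (0:ℝ) < T := by linarith
    have hfT : 0 < (T • (1 : Matrix (Fin 3) (Fin 3) ℝ) - M).det := by
      rw [hcubic]
      have hb2' : 0 ≤ (b2 + c) * (T*T) :=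
        mul_nonneg (by linarith [neg_abs_le b2, abs_nonneg b1, abs_nonneg b0]) (by positivity)
      have hb1' : 0 ≤ (b1 + c) * T :=
        mul_nonneg (by linarith [neg_abs_le b1, abs_nonneg b2, abs_nonneg b0]) hT0.le
      have hb0' : -c ≤ b0 := by linarith [neg_abs_le b0, abs_nonneg b2, abs_nonneg b1]
      have m1 : 0 ≤ T*T*(T - c - 1) := by
        apply mul_nonneg (by positivity); linarith
      have m2 : 0 ≤ T*(T - c - 1) := by
        apply mul_nonneg hT0.le; linarith
      nlinarith [hb2', hb1', hb0', m1, m2]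
    have hcont : Continuous fun t : ℝ => (t • (1 : Matrix (Fin 3) (Fin 3) ℝ) - M).det :=
      Continuous.matrix_det ((continuous_id.smul continuous_const).sub continuous_const)
    have hlamT : lam ≤ T := by linarith
    have hivt := intermediate_value_Icc hlamT hcont.continuousOn
    have h0mem : (0:ℝ) ∈ Set.Icc ((lam • (1 : Matrix (Fin 3) (Fin 3) ℝ) - M).det)
        ((T • (1 : Matrix (Fin 3) (Fin 3) ℝ) - M).det) := ⟨hle, hfT.le⟩
    obtain ⟨ρ, hρmem, hρ⟩ := hivt h0mem
    have hdet0 : (ρ • (1 : Matrix (Fin 3) (Fin 3) ℝ) - M).det = 0 := hρ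
    obtain ⟨v, hv0, hvec⟩ := (Matrix.exists_mulVec_eq_zero_iff).mpr hdet0
    have hMv : M.mulVec v = ρ • v := by
      have h' := hvec
      rw [Matrix.sub_mulVec, Matrix.smul_mulVec, Matrix.one_mulVec, sub_eq_zero] at h'
      exact h'.symm
    set w : Fin 3 → ℂ := fun i => (v i : ℂ) with hwdef
    have hw0 : w ≠ 0 := by
      intro hcontra
      apply hv0
      funext i
      have := congrFun hcontra i
      simpa [hwdef, Complex.ofReal_eq_zero] using this
    have heig : (M.map Complex.ofReal).mulVec w = (ρ:ℂ) • w := by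
      funext i
      have hi := congrFun hMv i
      simp only [Matrix.mulVec, dotProduct, Fin.sum_univ_three] at hi ⊢
      simp only [Matrix.map_apply, hwdef, Pi.smul_apply, smul_eq_mul]
      push_cast
      exact_mod_cast congrArg (Complex.ofReal) hi
    have habs := h (ρ:ℂ) w hw0 heig
    rw [Complex.norm_real, Real.norm_eq_abs] at habs
    have : lam ≤ ρ := hρmem.1
    have : ρ ≤ |ρ| := le_abs_self ρ
    linarith
  · -- backward
    intro hdet z v hv hzv
    by_contra hcon
    push_neg at hcon
    have hrow : ∀ i, lam * ‖v i‖ ≤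
        M i 0 * ‖v 0‖ + M i 1 * ‖v 1‖ + M i 2 * ‖v 2‖ := by
      intro i
      have hi := congrFun hzv i
      simp only [Matrix.mulVec, dotProduct, Fin.sum_univ_three,
        Matrix.map_apply, Pi.smul_apply, smul_eq_mul] at hi
      calc lam * ‖v i‖
          ≤ ‖z‖ * ‖v i‖ :=
            mul_le_mul_of_nonneg_right hcon (norm_nonneg _)
        _ = ‖z * v i‖ := (norm_mul z (v i)).symm
        _ = ‖(M i 0 : ℂ) * v 0 + (M i 1 : ℂ) * v 1 + (M i 2 : ℂ) * v 2‖ := by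
            rw [← hi]
        _ ≤ ‖(M i 0 : ℂ) * v 0‖ + ‖(M i 1 : ℂ) * v 1‖
              + ‖(M i 2 : ℂ) * v 2‖ := by
            calc ‖(M i 0 : ℂ) * v 0 + (M i 1 : ℂ) * v 1 + (M i 2 : ℂ) * v 2‖
                ≤ ‖(M i 0 : ℂ) * v 0 + (M i 1 : ℂ) * v 1‖
                    + ‖(M i 2 : ℂ) * v 2‖ := norm_add_le _ _
              _ ≤ _ := by
                  have := norm_add_le ((M i 0 : ℂ) * v 0) ((M i 1 : ℂ) * v 1)
                  linarith
        _ = M i 0 * ‖v 0‖ + M i 1 * ‖v 1‖ + M i 2 * ‖v 2‖ := by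
            rw [norm_mul, norm_mul, norm_mul, Complex.norm_real, Complex.norm_real,
              Complex.norm_real, Real.norm_of_nonneg (hMnonneg i 0), Real.norm_of_nonneg (hMnonneg i 1),
              Real.norm_of_nonneg (hMnonneg i 2)]
    have hex : ∃ i, v i ≠ 0 := Function.ne_iff.mp hv
    have hne : 0 < ‖v 0‖ ∨ 0 < ‖v 1‖ ∨ 0 < ‖v 2‖ := by
      obtain ⟨i, hi⟩ := hex
      fin_cases i
      · exact Or.inl (norm_pos_iff.mpr hi)
      · exact Or.inr (Or.inl (norm_pos_iff.mpr hi))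
      · exact Or.inr (Or.inr (norm_pos_iff.mpr hi))
    have hk := key_ineq (lam - M 0 0) (lam - M 1 1) (lam - M 2 2)
      (M 0 1) (M 0 2) (M 1 0) (M 1 2) (M 2 0) (M 2 1)
      (‖v 0‖) (‖v 1‖) (‖v 2‖)
      (by linarith [hdiag 0]) (by linarith [hdiag 1]) (by linarith [hdiag 2])
      (hMnonneg 0 1) (hMnonneg 0 2) (hMnonneg 1 0) (hMnonneg 1 2) (hMnonneg 2 0) (hMnonneg 2 1)
      (norm_nonneg _) (norm_nonneg _) (norm_nonneg _)
      hne
      (by have := hrow 0; nlinarith [this])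
      (by have := hrow 1; nlinarith [this])
      (by have := hrow 2; nlinarith [this])
    rw [hdet3 lam] at hdet
    linarith
end
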